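/- Let G be a group, κ : G → G a group automorphism with κ ∘ κ = id_G, and δ : G → G a map with κ ∘ δ = δ ∘ κ; define x ◁ y = κ(x)δ(y). Let a₁, …, aₙ ∈ G and suppose x ∈ G satisfies κ^{n+1}(x) = A_{a₁,…,aₙ}(x) ◁ κ^{n+1}(x). Then for every index i with 1 ≤ i ≤ n, one has A_{a₁,…,aₙ}(κ^{i+1}(aᵢ) ◁ x) = κ^{n+i}(aᵢ). -/

import Mathlib

private lemma iter_mul {G : Type*} [Group G] (κ : G →* G) (k : ℕ) (a b : G) :
    (⇑κ)^[k] (a * b) = (⇑κ)^[k] a * (⇑κ)^[k] b := by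
  induction k generalizing a b with
  | zero => simp
  | succ k ih => simp [Function.iterate_succ_apply, map_mul, ih]

private lemma iter_comm {G : Type*} [Group G] (κ : G →* G) (δ : G → G)
    (hcomm : ∀ x, κ (δ x) = δ (κ x)) (k : ℕ) (y : G) :
    (⇑κ)^[k] (δ y) = δ ((⇑κ)^[k] y) := by
  induction k generalizing y with
  | zero => simp
  | succ k ih => simp [Function.iterate_succ_apply, hcomm, ih]

private lemma iter_two {G : Type*} [Group G] (κ : G →* G) (hκ : ∀ x, κ (κ x) = x)
    (k : ℕ) (y : G) : (⇑κ)^[k + 2] y = (⇑κ)^[k] y := by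
  rw [Function.iterate_succ_apply, Function.iterate_succ_apply, hκ]

private lemma iter_one {G : Type*} [Group G] (κ : G →* G) (k : ℕ) :
    (⇑κ)^[k] (1 : G) = 1 := by
  induction k with
  | zero => rfl
  | succ k ih => rw [Function.iterate_succ_apply, map_one, ih]

private lemma fold_split {G : Type*} [Group G] (κ : G →* G) (δ : G → G) :
    ∀ (l : List G) (x : G),
      l.foldl (fun u v => κ u * δ v) x
        = (⇑κ)^[l.length] x * l.foldl (fun u v => κ u * δ v) 1 := by
  intro l
  induction l with
  | nil => simp
  | cons b l ih =>
      intro x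
      rw [List.foldl_cons, List.foldl_cons, ih (κ x * δ b), ih (κ 1 * δ b),
        List.length_cons]
      rw [iter_mul κ l.length (κ x) (δ b), iter_mul κ l.length (κ 1) (δ b),
        map_one, iter_one, one_mul,
        ← Function.iterate_succ_apply (⇑κ) l.length x, mul_assoc]

theorem stmt_6 {G : Type*} [Group G] (κ : G →* G) (hκ : ∀ x, κ (κ x) = x)
    (δ : G → G) (hcomm : ∀ x, κ (δ x) = δ (κ x))
    (n : ℕ) (a : Fin n → G) (x : G)
    (hx : (⇑κ)^[n + 1] x
        = κ ((List.ofFn a).foldl (fun u v => κ u * δ v) x) * δ ((⇑κ)^[n + 1] x)) :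
    ∀ j : Fin n,
      (List.ofFn a).foldl (fun u v => κ u * δ v)
          (κ ((⇑κ)^[j.val + 2] (a j)) * δ x)
        = (⇑κ)^[n + j.val + 1] (a j) := by
  intro j
  have hlen : (List.ofFn a).length = n := List.length_ofFn
  have hsplit := fold_split κ δ (List.ofFn a)
  set C : G := (List.ofFn a).foldl (fun u v => κ u * δ v) 1 with hC
  have h1 : (⇑κ)^[n + 1] x
      = (⇑κ)^[n + 1] x * (κ C * δ ((⇑κ)^[n + 1] x)) := by
    conv_lhs => rw [hx]
    rw [hsplit x, hlen, map_mul, ← Function.iterate_succ_apply' (⇑κ) n x, mul_assoc]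
  have h2 : κ C * δ ((⇑κ)^[n + 1] x) = 1 :=
    mul_left_cancel (a := (⇑κ)^[n + 1] x) (by rw [← h1, mul_one])
  have hCval : C = (δ ((⇑κ)^[n] x))⁻¹ := by
    have h3 : κ C = (δ ((⇑κ)^[n + 1] x))⁻¹ := eq_inv_of_mul_eq_one_left h2
    have h4 := congrArg κ h3
    rw [hκ, map_inv, hcomm, ← Function.iterate_succ_apply' (⇑κ) (n + 1) x] at h4
    rw [h4, show (⇑κ)^[n + 1 + 1] x = (⇑κ)^[n] x from iter_two κ hκ n x]
  rw [hsplit, hlen, iter_mul, ← Function.iterate_succ_apply' (⇑κ) (j.val + 2) (a j),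
    ← Function.iterate_add_apply (⇑κ) n (j.val + 2 + 1) (a j),
    iter_comm κ δ hcomm, hCval,
    show n + (j.val + 2 + 1) = (n + j.val + 1) + 2 by ring,
    iter_two κ hκ]
  simp
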